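/- Let G be a vertex-minimal graph (with respect to the number of vertices) for which no odd 4-coloring exists. Then G has no vertex of degree 1. -/

import Mathlib

/-- An odd coloring of a graph: a proper coloring such that every non-isolated vertex
has some color appearing an odd number of times in its neighborhood. -/
def IsOddColoring {V α : Type*} (G : SimpleGraph V) (φ : V → α) : Prop :=
  (∀ u v : V, G.Adj u v → φ u ≠ φ v) ∧
  ∀ v : V, (∃ u, G.Adj v u) → ∃ c : α, Odd {u : V | G.Adj v u ∧ φ u = c}.ncard

lemma exists_third (x y : Fin 4) : ∃ a : Fin 4, a ≠ x ∧ a ≠ y := by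
  by_contra h
  push_neg at h
  have hsub : (Finset.univ : Finset (Fin 4)) ⊆ {x, y} := by
    intro a _
    rcases eq_or_ne a x with rfl | hne
    · simp
    · simp [h a hne]
  have h1 := Finset.card_le_card hsub
  have h2 : ({x, y} : Finset (Fin 4)).card ≤ 2 :=
    (Finset.card_insert_le _ _).trans (by simp)
  simp [Finset.card_univ] at h1
  omega

/-- A vertex-minimal graph admitting no odd 4-coloring has no vertex of
degree 1. -/
theorem minimal_no_odd4_has_no_degree_one_vertex
    {V : Type} [Fintype V] (G : SimpleGraph V)
    (hno : ¬ ∃ φ : V → Fin 4, IsOddColoring G φ)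
    (hmin : ∀ (W : Type) [Fintype W] (H : SimpleGraph W),
      Fintype.card W < Fintype.card V → ∃ φ : W → Fin 4, IsOddColoring H φ) :
    ∀ v : V, (G.neighborSet v).ncard ≠ 1 := by
  classical
  intro v hv
  rw [Set.ncard_eq_one] at hv
  obtain ⟨u, hu⟩ := hv
  have hadj : G.Adj v u := by
    have : u ∈ G.neighborSet v := by rw [hu]; exact rfl
    exact this
  have huniq : ∀ x, G.Adj x v → x = u := by
    intro x hx
    have : x ∈ G.neighborSet v := hx.symm
    rwa [hu, Set.mem_singleton_iff] at this
  have huv : u ≠ v := fun h => G.loopless.irrefl v (h ▸ hadj)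
  let W := {x : V // x ≠ v}
  let H : SimpleGraph W := G.comap Subtype.val
  have hcard : Fintype.card W < Fintype.card V := by
    have hinj : Function.Injective (Subtype.val : W → V) := Subtype.val_injective
    apply Fintype.card_lt_of_injective_of_notMem _ hinj (b := v)
    rintro ⟨⟨x, hx⟩, h⟩
    exact hx h
  obtain ⟨φ, hφ1, hφ2⟩ := hmin W H hcard
  let u' : W := ⟨u, huv⟩
  -- choose c2 : an odd color of u' in H (or junk if u' is isolated), and a avoiding both
  have hc2' : ∃ c2 : Fin 4, (∃ w, H.Adj u' w) → Odd {w : W | H.Adj u' w ∧ φ w = c2}.ncard := by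
    by_cases hiso : ∃ w, H.Adj u' w
    · obtain ⟨c2, hc2⟩ := hφ2 u' hiso
      exact ⟨c2, fun _ => hc2⟩
    · exact ⟨0, fun h => absurd h hiso⟩
  obtain ⟨c2, hc2⟩ := hc2'
  obtain ⟨a, ha1, ha2⟩ := exists_third (φ u') c2
  refine hno ⟨fun x => if h : x = v then a else φ ⟨x, h⟩, ?_, ?_⟩
  · intro x y hxy
    dsimp only
    by_cases hx : x = v
    · have hy : y = u := huniq y (by rw [← hx]; exact hxy.symm)
      rw [hx, hy, dif_pos rfl, dif_neg huv]
      exact ha1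
    · by_cases hy : y = v
      · have hx' : x = u := huniq x (by rw [← hy]; exact hxy)
        rw [hx', hy, dif_pos rfl, dif_neg huv]
        exact fun h => ha1 h.symm
      · rw [dif_neg hx, dif_neg hy]
        exact hφ1 ⟨x, hx⟩ ⟨y, hy⟩ hxy
  · intro x hx
    by_cases hxv : x = v
    · rw [hxv]
      refine ⟨φ u', ?_⟩
      have hset : {y : V | G.Adj v y ∧ (if h : y = v then a else φ ⟨y, h⟩) = φ u'} = {u} := by
        ext y
        simp only [Set.mem_setOf_eq, Set.mem_singleton_iff]
        constructor
        · rintro ⟨hy, -⟩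
          have : y ∈ G.neighborSet v := hy
          rwa [hu, Set.mem_singleton_iff] at this
        · rintro rfl
          exact ⟨hadj, by rw [dif_neg huv]⟩
      rw [hset, Set.ncard_singleton]
      exact odd_one
    · by_cases hxu : x = u
      · -- x = u : split on whether u' is isolated in H
        by_cases hiso : ∃ w, H.Adj u' w
        · refine ⟨c2, ?_⟩
          have key : {y : V | G.Adj x y ∧ (if h : y = v then a else φ ⟨y, h⟩) = c2}
              = Subtype.val '' {w : W | H.Adj u' w ∧ φ w = c2} := by
            ext y
            simp only [Set.mem_setOf_eq, Set.mem_image]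
            constructor
            · rintro ⟨hy, hc⟩
              have hyv : y ≠ v := by
                intro h
                rw [dif_pos h] at hc
                exact ha2 hc
              rw [dif_neg hyv] at hc
              refine ⟨⟨y, hyv⟩, ⟨?_, hc⟩, rfl⟩
              show G.Adj u y
              rwa [← hxu]
            · rintro ⟨⟨y, hyv⟩, ⟨hy, hc⟩, rfl⟩
              refine ⟨by rw [hxu]; exact hy, by rw [dif_neg hyv]; exact hc⟩
          rw [key, Set.ncard_image_of_injective _ Subtype.val_injective]
          exact hc2 hiso
        · -- u's only G-neighbor is v
          refine ⟨a, ?_⟩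
          have hset : {y : V | G.Adj x y ∧ (if h : y = v then a else φ ⟨y, h⟩) = a} = {v} := by
            ext y
            simp only [Set.mem_setOf_eq, Set.mem_singleton_iff]
            constructor
            · rintro ⟨hy, -⟩
              by_contra hyv
              exact hiso ⟨⟨y, hyv⟩, by show G.Adj u y; rwa [← hxu]⟩
            · rintro rfl
              exact ⟨by rw [hxu]; exact hadj.symm, dif_pos rfl⟩
          rw [hset, Set.ncard_singleton]
          exact odd_one
      · -- x ≠ v, x ≠ u
        have hxv' : ∀ y, G.Adj x y → y ≠ v := by
          intro y hy h
          exact hxu (huniq x (by rwa [← h]))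
        have hx' : ∃ w, H.Adj (⟨x, hxv⟩ : W) w := by
          obtain ⟨y, hy⟩ := hx
          exact ⟨⟨y, hxv' y hy⟩, hy⟩
        obtain ⟨c, hc⟩ := hφ2 ⟨x, hxv⟩ hx'
        refine ⟨c, ?_⟩
        have key : {y : V | G.Adj x y ∧ (if h : y = v then a else φ ⟨y, h⟩) = c}
            = Subtype.val '' {w : W | H.Adj (⟨x, hxv⟩ : W) w ∧ φ w = c} := by
          ext y
          simp only [Set.mem_setOf_eq, Set.mem_image]
          constructor
          · rintro ⟨hy, hc'⟩
            have hyv := hxv' y hy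
            rw [dif_neg hyv] at hc'
            exact ⟨⟨y, hyv⟩, ⟨hy, hc'⟩, rfl⟩
          · rintro ⟨⟨y, hyv⟩, ⟨hy, hc'⟩, rfl⟩
            exact ⟨hy, by rw [dif_neg hyv]; exact hc'⟩
        rw [key, Set.ncard_image_of_injective _ Subtype.val_injective]
        exact hc
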